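/- Let n ≥ 2 and let ψ be a rational map with φ(z) = z·ψ(z^n). Then φ commutes with Q(z) = α/conj(z) (where α ∈ ℂ, α ≠ 0) if and only if ψ(z)·conj(ψ)(α^n/z) = 1 for all z, where conj(ψ) denotes the rational map obtained by conjugating all coefficients of ψ. Moreover Q² is the rotation z ↦ (α/conj(α))·z, so Q² ∈ ⟨T(z) = e^{2πi/n}z⟩ forces α/conj(α) to be an n-th root of unity. -/

import Mathlib

open OnePoint Complex Polynomial

/-- The Möbius transformation determined by the matrix `[[a,b],[c,d]]`,
acting on the Riemann sphere `OnePoint ℂ`. -/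
noncomputable def moeb (a b c d : ℂ) (p : OnePoint ℂ) : OnePoint ℂ :=
  OnePoint.elim p (if c = 0 then ∞ else ((a / c : ℂ) : OnePoint ℂ))
    (fun z => if c * z + d = 0 then ∞ else (((a * z + b) / (c * z + d) : ℂ) : OnePoint ℂ))

/-- Complex conjugation extended to the Riemann sphere. -/
noncomputable def sphConj (p : OnePoint ℂ) : OnePoint ℂ :=
  OnePoint.elim p ∞ (fun z => ((starRingEnd ℂ) z : OnePoint ℂ))

/-- The imaginary reflection `τ(z) = -1/conj z` on the Riemann sphere. -/
noncomputable def tauSph (p : OnePoint ℂ) : OnePoint ℂ :=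
  moeb 0 (-1) 1 0 (sphConj p)

/-- The rational map on the Riemann sphere determined by a quotient `P/Q`
of (coprime) polynomials. -/
noncomputable def ratMap (P Q : Polynomial ℂ) (p : OnePoint ℂ) : OnePoint ℂ :=
  OnePoint.elim p
    (if Q.degree < P.degree then ∞
     else ((P.coeff Q.natDegree / Q.leadingCoeff : ℂ) : OnePoint ℂ))
    (fun z => if Q.eval z = 0 then ∞ else ((P.eval z / Q.eval z : ℂ) : OnePoint ℂ))


private lemma conj_eval (P : Polynomial ℂ) (u : ℂ) :
    (P.map (starRingEnd ℂ)).eval u = (starRingEnd ℂ) (P.eval ((starRingEnd ℂ) u)) := by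
  rw [eval_map]
  have h := Polynomial.hom_eval₂ P (RingHom.id ℂ) (starRingEnd ℂ) ((starRingEnd ℂ) u)
  rw [Polynomial.eval, h, RingHom.comp_id, Complex.conj_conj]

private noncomputable def rev (s : ℂ) (P : Polynomial ℂ) : Polynomial ℂ :=
  ∑ j ∈ Finset.range (P.natDegree + 1), C (P.coeff j * s ^ j) * X ^ (P.natDegree - j)

private lemma rev_eval (s : ℂ) (P : Polynomial ℂ) {w : ℂ} (hw : w ≠ 0) :
    (rev s P).eval w = w ^ P.natDegree * P.eval (s / w) := by
  rw [rev, eval_finset_sum, eval_eq_sum_range' (Nat.lt_succ_self _) (s / w), Finset.mul_sum]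
  refine Finset.sum_congr rfl fun j hj => ?_
  rw [Finset.mem_range] at hj
  have hj' : j ≤ P.natDegree := by omega
  have h1 : w ^ (P.natDegree - j) * w ^ j = w ^ P.natDegree := pow_sub_mul_pow w hj'
  simp only [eval_mul, eval_C, eval_pow, eval_X, div_pow]
  field_simp
  linear_combination P.coeff j * s ^ j * h1

private lemma rev_coeff_zero (s : ℂ) (P : Polynomial ℂ) :
    (rev s P).coeff 0 = P.leadingCoeff * s ^ P.natDegree := by
  rw [rev, finset_sum_coeff]
  rw [Finset.sum_eq_single P.natDegree]
  · rw [Nat.sub_self, pow_zero, mul_one, coeff_C, if_pos rfl, Polynomial.leadingCoeff]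
  · intro j hj hne
    rw [Finset.mem_range] at hj
    have : P.natDegree - j ≠ 0 := by omega
    rw [coeff_C_mul, coeff_X_pow, if_neg (Ne.symm this), mul_zero]
  · intro h
    exact absurd (Finset.self_mem_range_succ _) h

private lemma rev_ne_zero {s : ℂ} (hs : s ≠ 0) {P : Polynomial ℂ} (hP : P ≠ 0) :
    rev s P ≠ 0 := fun h => by
  have := rev_coeff_zero s P
  rw [h, coeff_zero] at this
  exact (mul_ne_zero (leadingCoeff_ne_zero.mpr hP) (pow_ne_zero _ hs)) this.symm

private lemma rev_ntd_zero {s : ℂ} (hs : s ≠ 0) {P : Polynomial ℂ} (hP : P ≠ 0) :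
    (rev s P).natTrailingDegree = 0 := by
  refine Nat.le_zero.mp (natTrailingDegree_le_of_ne_zero ?_)
  rw [rev_coeff_zero]
  exact mul_ne_zero (leadingCoeff_ne_zero.mpr hP) (pow_ne_zero _ hs)

private lemma ntd_map (P : Polynomial ℂ) :
    (P.map (starRingEnd ℂ)).natTrailingDegree = P.natTrailingDegree := by
  by_cases hP : P = 0
  · simp [hP]
  have hinj : Function.Injective (starRingEnd ℂ) := (starRingEnd ℂ).injective
  have hm : P.map (starRingEnd ℂ) ≠ 0 := (Polynomial.map_ne_zero_iff hinj).mpr hP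
  refine le_antisymm ?_ ?_
  · refine natTrailingDegree_le_of_ne_zero ?_
    rw [coeff_map]
    simpa using coeff_natTrailingDegree_ne_zero.mpr hP
  · refine natTrailingDegree_le_of_ne_zero (fun h => ?_)
    have := coeff_natTrailingDegree_ne_zero.mpr hm
    rw [coeff_map, h] at this
    simp at this

private lemma key (n : ℕ) (hn : 2 ≤ n) (α : ℂ) (hα : α ≠ 0) (A B : Polynomial ℂ)
    (hAB : IsCoprime A B) (hB : B ≠ 0)
    (H : ∀ z : ℂ, z ≠ 0 → B.eval z ≠ 0 →
      (B.map (starRingEnd ℂ)).eval (α ^ n / z) ≠ 0 →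
      (A.eval z / B.eval z) * ((A.map (starRingEnd ℂ)).eval (α ^ n / z) /
        (B.map (starRingEnd ℂ)).eval (α ^ n / z)) = 1) :
    (∀ w : ℂ, w ≠ 0 → A.eval w * (A.map (starRingEnd ℂ)).eval (α ^ n / w)
        = B.eval w * (B.map (starRingEnd ℂ)).eval (α ^ n / w))
    ∧ A ≠ 0
    ∧ (B.eval 0 ≠ 0 → B.natDegree ≤ A.natDegree)
    ∧ (B.eval 0 = 0 → A.eval 0 ≠ 0 ∧ n * A.natDegree + 1 < n * B.natDegree) := by
  set s : ℂ := α ^ n with hs_def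
  have hs : s ≠ 0 := pow_ne_zero _ hα
  set A' := A.map (starRingEnd ℂ) with hA'def
  set B' := B.map (starRingEnd ℂ) with hB'def
  have hinj : Function.Injective (starRingEnd ℂ) := (starRingEnd ℂ).injective
  have hB' : B' ≠ 0 := (Polynomial.map_ne_zero_iff hinj).mpr hB
  have hdA' : A'.natDegree = A.natDegree := natDegree_map_eq_of_injective hinj A
  have hdB' : B'.natDegree = B.natDegree := natDegree_map_eq_of_injective hinj B
  set L : Polynomial ℂ := X ^ B.natDegree * (A * rev s A') with hLdef
  set R : Polynomial ℂ := X ^ A.natDegree * (B * rev s B') with hRdef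
  -- the two polynomials agree on a cofinite set, hence are equal
  have hLR : L = R := by
    apply Polynomial.eq_of_infinite_eval_eq
    have hfin : (({0} : Set ℂ) ∪ (B.roots.toFinset : Set ℂ)
        ∪ ((fun r : ℂ => s / r) '' (B'.roots.toFinset : Set ℂ))).Finite := by
      refine ((Set.finite_singleton _).union (B.roots.toFinset.finite_toSet)).union ?_
      exact (B'.roots.toFinset.finite_toSet).image _
    refine Set.Infinite.mono ?_ hfin.infinite_compl
    intro z hz
    simp only [Set.mem_compl_iff, Set.mem_union, Set.mem_singleton_iff,
      Finset.mem_coe, Multiset.mem_toFinset, Set.mem_image, not_or, not_exists] at hz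
    obtain ⟨⟨hz0, hzB⟩, hzB'⟩ := hz
    have hz0 : z ≠ 0 := hz0
    have hBz : B.eval z ≠ 0 := fun h => hzB (by
      rw [mem_roots hB]; exact h)
    have hB'z : B'.eval (s / z) ≠ 0 := by
      intro h
      refine hzB' (s / z) ⟨?_, ?_⟩
      · rw [mem_roots hB']; exact h
      · field_simp
    have hmain := H z hz0 hBz hB'z
    have hprod : A.eval z * A'.eval (s / z) = B.eval z * B'.eval (s / z) := by
      field_simp at hmain
      linear_combination hmain
    show L.eval z = R.eval z
    rw [hLdef, hRdef]
    simp only [eval_mul, eval_pow, eval_X, rev_eval s A' hz0, rev_eval s B' hz0, hdA', hdB']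
    linear_combination (z ^ A.natDegree * z ^ B.natDegree) * hprod
  -- A ≠ 0
  have hA : A ≠ 0 := by
    intro hA0
    rw [hLdef, hRdef, hA0, zero_mul, mul_zero] at hLR
    have := hLR.symm
    rcases mul_eq_zero.mp this with h | h
    · exact pow_ne_zero _ X_ne_zero h
    · rcases mul_eq_zero.mp h with h' | h'
      · exact hB h'
      · exact rev_ne_zero hs hB' h'
  have hA' : A' ≠ 0 := (Polynomial.map_ne_zero_iff hinj).mpr hA
  -- evaluate at any nonzero w
  have hstar : ∀ w : ℂ, w ≠ 0 → A.eval w * A'.eval (s / w) = B.eval w * B'.eval (s / w) := by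
    intro w hw
    have h := congrArg (Polynomial.eval w) hLR
    rw [hLdef, hRdef] at h
    simp only [eval_mul, eval_pow, eval_X, rev_eval s A' hw, rev_eval s B' hw, hdA', hdB'] at h
    have hpow : (w : ℂ) ^ (A.natDegree + B.natDegree) ≠ 0 := pow_ne_zero _ hw
    apply mul_left_cancel₀ hpow
    linear_combination h
  -- coprimality at a point
  have hcop : ∀ t : ℂ, ¬(A.eval t = 0 ∧ B.eval t = 0) := by
    rintro t ⟨h1, h2⟩
    obtain ⟨u, v, huv⟩ := hAB
    have := congrArg (Polynomial.eval t) huv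
    simp [h1, h2] at this
  -- trailing degree identity
  have hntd : B.natDegree + A.natTrailingDegree = A.natDegree + B.natTrailingDegree := by
    have h := congrArg Polynomial.natTrailingDegree hLR
    rw [hLdef, hRdef,
      natTrailingDegree_mul (pow_ne_zero _ X_ne_zero) (mul_ne_zero hA (rev_ne_zero hs hA')),
      natTrailingDegree_mul (pow_ne_zero _ X_ne_zero) (mul_ne_zero hB (rev_ne_zero hs hB')),
      natTrailingDegree_mul hA (rev_ne_zero hs hA'),
      natTrailingDegree_mul hB (rev_ne_zero hs hB'),
      natTrailingDegree_X_pow, natTrailingDegree_X_pow,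
      rev_ntd_zero hs hA', rev_ntd_zero hs hB'] at h
    have e1 : A'.natTrailingDegree = A.natTrailingDegree := by rw [hA'def]; exact ntd_map A
    have e2 : B'.natTrailingDegree = B.natTrailingDegree := by rw [hB'def]; exact ntd_map B
    omega
  refine ⟨hstar, hA, ?_, ?_⟩
  · intro hB0
    have : B.natTrailingDegree = 0 :=
      natTrailingDegree_eq_zero.mpr (Or.inr (by rwa [coeff_zero_eq_eval_zero]))
    omega
  · intro hB0
    have hA0 : A.eval 0 ≠ 0 := fun h => hcop 0 ⟨h, hB0⟩
    have h1 : A.natTrailingDegree = 0 :=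
      natTrailingDegree_eq_zero.mpr (Or.inr (by rwa [coeff_zero_eq_eval_zero]))
    have h2 : B.natTrailingDegree ≠ 0 := by
      intro h
      rcases natTrailingDegree_eq_zero.mp h with h' | h'
      · exact hB h'
      · rw [coeff_zero_eq_eval_zero] at h'; exact h' hB0
    refine ⟨hA0, ?_⟩
    have : B.natDegree = A.natDegree + B.natTrailingDegree := by omega
    nlinarith [hn, this, Nat.one_le_iff_ne_zero.mpr h2]

private lemma ratMap_coe (P Q : Polynomial ℂ) (z : ℂ) :
    ratMap P Q ↑z = if Q.eval z = 0 then ∞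
      else ((P.eval z / Q.eval z : ℂ) : OnePoint ℂ) := rfl

private lemma ratMap_infty (P Q : Polynomial ℂ) :
    ratMap P Q ∞ = if Q.degree < P.degree then ∞
      else ((P.coeff Q.natDegree / Q.leadingCoeff : ℂ) : OnePoint ℂ) := rfl

private lemma qmap_infty (α : ℂ) : moeb 0 α 1 0 (sphConj ∞) = ((0 : ℂ) : OnePoint ℂ) := by
  show (if (1 : ℂ) = 0 then ∞ else (((0 : ℂ) / 1 : ℂ) : OnePoint ℂ)) = _
  rw [if_neg one_ne_zero]
  norm_num

private lemma qmap_coe (α z : ℂ) :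
    moeb 0 α 1 0 (sphConj ↑z) = if z = 0 then ∞
      else ((α / (starRingEnd ℂ) z : ℂ) : OnePoint ℂ) := by
  show (if 1 * (starRingEnd ℂ) z + 0 = 0 then ∞
    else (((0 * ((starRingEnd ℂ) z) + α) / (1 * (starRingEnd ℂ) z + 0) : ℂ) : OnePoint ℂ)) = _
  simp only [one_mul, add_zero, zero_mul, zero_add, _root_.map_eq_zero]

private lemma evalQ (B : Polynomial ℂ) (n : ℕ) (t : ℂ) :
    (B.comp (X ^ n)).eval t = B.eval (t ^ n) := by simp [eval_comp]

private lemma evalP (A : Polynomial ℂ) (n : ℕ) (t : ℂ) :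
    ((X * A.comp (X ^ n)).eval t = t * A.eval (t ^ n)) := by simp [eval_comp]


/-- `φ(z) = z ψ(z^n)` commutes with `Q(z) = α/conj z` iff
`ψ(z)·conj(ψ)(α^n/z) = 1`; moreover `Q²` is the rotation `z ↦ (α/conj α) z`,
and `Q² ∈ ⟨T⟩` forces `α/conj α` to be an `n`-th root of unity. -/
theorem commutes_with_alpha_inversion_iff
    (n : ℕ) (hn : 2 ≤ n) (α : ℂ) (hα : α ≠ 0)
    (A B : Polynomial ℂ) (hAB : IsCoprime A B) (hB : B ≠ 0) :
    ((∀ p, moeb 0 α 1 0 (sphConj (ratMap (X * A.comp (X ^ n)) (B.comp (X ^ n)) p))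
        = ratMap (X * A.comp (X ^ n)) (B.comp (X ^ n)) (moeb 0 α 1 0 (sphConj p))) ↔
      (∀ z : ℂ, z ≠ 0 → B.eval z ≠ 0 →
        (B.map (starRingEnd ℂ)).eval (α ^ n / z) ≠ 0 →
        (A.eval z / B.eval z) *
          ((A.map (starRingEnd ℂ)).eval (α ^ n / z) /
            (B.map (starRingEnd ℂ)).eval (α ^ n / z)) = 1))
    ∧ (∀ p, moeb 0 α 1 0 (sphConj (moeb 0 α 1 0 (sphConj p)))
        = moeb (α / (starRingEnd ℂ) α) 0 0 1 p)
    ∧ ((∃ k : ℕ, α / (starRingEnd ℂ) α = Complex.exp (2 * Real.pi * Complex.I / n) ^ k) →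
        (α / (starRingEnd ℂ) α) ^ n = 1) := by
  refine ⟨?_, ?_, ?_⟩
  · have hnpos : 0 < n := by omega
    have hαn : (α ^ n : ℂ) ≠ 0 := pow_ne_zero _ hα
    constructor
    · -- forward direction
      intro Hcom z hz hBz hB'z
      obtain ⟨c, hc⟩ := IsAlgClosed.exists_pow_nat_eq (α ^ n / z) hnpos
      have hdvz : (α ^ n / z : ℂ) ≠ 0 := div_ne_zero hαn hz
      have hc0 : c ≠ 0 := by
        intro h
        rw [h, zero_pow hnpos.ne'] at hc
        exact hdvz hc.symm
      have hcc : (starRingEnd ℂ) c ≠ 0 := by simpa using hc0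
      have hceq : ((starRingEnd ℂ) c) ^ n = (starRingEnd ℂ) (α ^ n / z) := by
        rw [← map_pow, hc]
      have hBev : B.eval (((starRingEnd ℂ) c) ^ n)
          = (starRingEnd ℂ) ((B.map (starRingEnd ℂ)).eval (α ^ n / z)) := by
        rw [hceq, conj_eval, Complex.conj_conj]
      have hAev : A.eval (((starRingEnd ℂ) c) ^ n)
          = (starRingEnd ℂ) ((A.map (starRingEnd ℂ)).eval (α ^ n / z)) := by
        rw [hceq, conj_eval, Complex.conj_conj]
      have hBevne : B.eval (((starRingEnd ℂ) c) ^ n) ≠ 0 := by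
        rw [hBev]; simpa using hB'z
      have hacz : ((α / c) ^ n : ℂ) = z := by
        rw [div_pow, hc]
        field_simp
      have hcom := Hcom (((starRingEnd ℂ) c : ℂ) : OnePoint ℂ)
      rw [qmap_coe α ((starRingEnd ℂ) c), if_neg hcc, Complex.conj_conj,
        ratMap_coe _ _ ((starRingEnd ℂ) c), evalQ, if_neg hBevne, evalP,
        ratMap_coe _ _ (α / c), evalQ, hacz, if_neg hBz, evalP, hacz] at hcom
      by_cases hA' : (A.map (starRingEnd ℂ)).eval (α ^ n / z) = 0
      · rw [hAev, hA', map_zero, mul_zero, zero_div, qmap_coe α 0, if_pos rfl] at hcom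
        exact (OnePoint.infty_ne_coe _ hcom).elim
      · have hAevne : A.eval (((starRingEnd ℂ) c) ^ n) ≠ 0 := by
          rw [hAev]; simpa using hA'
        have hval : ((starRingEnd ℂ) c * A.eval (((starRingEnd ℂ) c) ^ n)
            / B.eval (((starRingEnd ℂ) c) ^ n) : ℂ) ≠ 0 :=
          div_ne_zero (mul_ne_zero hcc hAevne) hBevne
        rw [qmap_coe α _, if_neg hval, OnePoint.coe_eq_coe] at hcom
        simp only [map_div₀, map_mul, hAev, hBev, Complex.conj_conj] at hcom
        field_simp [hc0, hA', hB'z, hBz] at hcom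
        field_simp [hB'z, hBz]
        have h2 : (α * c) * (eval z A * eval (α ^ n / z) (map (starRingEnd ℂ) A))
            = (α * c) * (eval z B * eval (α ^ n / z) (map (starRingEnd ℂ) B)) := by
          linear_combination (-(α * c)) * hcom
        have h3 := mul_left_cancel₀ (mul_ne_zero hα hc0) h2
        linear_combination h3
    · -- backward direction
      intro H
      obtain ⟨hstar, hA, h3, h4⟩ := key n hn α hα A B hAB hB H
      have hcop : ∀ t : ℂ, ¬(A.eval t = 0 ∧ B.eval t = 0) := by
        rintro t ⟨h1, h2⟩
        obtain ⟨u, v, huv⟩ := hAB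
        have := congrArg (Polynomial.eval t) huv
        simp [h1, h2] at this
      have hcompA : A.comp (X ^ n) ≠ 0 := by
        intro h
        rw [← expand_eq_comp_X_pow] at h
        exact hA (expand_injective hnpos (by rw [h, map_zero]))
      have hcompB : B.comp (X ^ n) ≠ 0 := by
        intro h
        rw [← expand_eq_comp_X_pow] at h
        exact hB (expand_injective hnpos (by rw [h, map_zero]))
      have hPne : X * A.comp (X ^ n) ≠ 0 := mul_ne_zero X_ne_zero hcompA
      have hdP : (X * A.comp (X ^ n)).natDegree = A.natDegree * n + 1 := by
        rw [natDegree_X_mul hcompA, natDegree_comp, natDegree_X_pow]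
      have hdQ : (B.comp (X ^ n)).natDegree = B.natDegree * n := by
        rw [natDegree_comp, natDegree_X_pow]
      have hQ0 : (B.comp (X ^ n)).eval 0 = B.eval 0 := by
        rw [evalQ, zero_pow hnpos.ne']
      have hphi0 : ratMap (X * A.comp (X ^ n)) (B.comp (X ^ n)) ((0:ℂ) : OnePoint ℂ)
          = if B.eval 0 = 0 then ∞ else (((0:ℂ) : OnePoint ℂ)) := by
        rw [ratMap_coe, hQ0]
        by_cases h : B.eval 0 = 0
        · rw [if_pos h, if_pos h]
        · rw [if_neg h, if_neg h, evalP, zero_mul, zero_div]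
      have hphiinf : ratMap (X * A.comp (X ^ n)) (B.comp (X ^ n)) ∞
          = if B.eval 0 = 0 then (((0:ℂ) : OnePoint ℂ)) else ∞ := by
        rw [ratMap_infty]
        by_cases h : B.eval 0 = 0
        · obtain ⟨hA0, hdeg⟩ := h4 h
          rw [if_pos h]
          have hlt : ¬ ((B.comp (X ^ n)).degree < (X * A.comp (X ^ n)).degree) := by
            rw [degree_eq_natDegree hcompB, degree_eq_natDegree hPne, Nat.cast_lt, hdP, hdQ]
            push_neg
            nlinarith [hdeg]
          rw [if_neg hlt]
          have hcoeff : (X * A.comp (X ^ n)).coeff ((B.comp (X ^ n)).natDegree) = 0 := by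
            rw [hdQ]
            have hk1 : 1 ≤ B.natDegree * n := by nlinarith [hdeg]
            have he : B.natDegree * n = (B.natDegree * n - 1) + 1 := by omega
            have hndvd : ¬ n ∣ B.natDegree * n - 1 := by
              intro hdvd
              have h2 : n ∣ B.natDegree * n - (B.natDegree * n - 1) :=
                Nat.dvd_sub (dvd_mul_left n _) hdvd
              rw [show B.natDegree * n - (B.natDegree * n - 1) = 1 by omega] at h2
              have := Nat.le_of_dvd one_pos h2
              omega
            rw [he, coeff_X_mul, ← expand_eq_comp_X_pow, coeff_expand hnpos, if_neg hndvd]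
          rw [hcoeff, zero_div]
        · have hdeg := h3 h
          rw [if_neg h]
          have hlt : (B.comp (X ^ n)).degree < (X * A.comp (X ^ n)).degree := by
            rw [degree_eq_natDegree hcompB, degree_eq_natDegree hPne, Nat.cast_lt, hdP, hdQ]
            nlinarith [hdeg]
          rw [if_pos hlt]
      intro p
      induction p using OnePoint.rec with
      | infty =>
        rw [hphiinf, qmap_infty, hphi0]
        by_cases hB0 : B.eval 0 = 0
        · rw [if_pos hB0, if_pos hB0, qmap_coe, if_pos rfl]
        · rw [if_neg hB0, if_neg hB0, qmap_infty]
      | coe z =>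
        by_cases hz : z = 0
        · subst hz
          rw [hphi0, qmap_coe α 0, if_pos rfl, hphiinf]
          by_cases hB0 : B.eval 0 = 0
          · rw [if_pos hB0, if_pos hB0, qmap_infty]
          · rw [if_neg hB0, if_neg hB0, qmap_coe, if_pos rfl]
        · have hzn : z ^ n ≠ 0 := pow_ne_zero _ hz
          have hcz : (starRingEnd ℂ) z ≠ 0 := by simpa using hz
          have hczn : ((starRingEnd ℂ) z) ^ n ≠ 0 := pow_ne_zero _ hcz
          have hw : (α ^ n / ((starRingEnd ℂ) z) ^ n : ℂ) ≠ 0 := div_ne_zero hαn hczn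
          have hcw : α ^ n / (α ^ n / ((starRingEnd ℂ) z) ^ n) = ((starRingEnd ℂ) z) ^ n := by
            field_simp
          have hstarw := hstar (α ^ n / ((starRingEnd ℂ) z) ^ n) hw
          rw [hcw] at hstarw
          have hA'c : (A.map (starRingEnd ℂ)).eval (((starRingEnd ℂ) z) ^ n)
              = (starRingEnd ℂ) (A.eval (z ^ n)) := by
            rw [conj_eval, ← map_pow, Complex.conj_conj]
          have hB'c : (B.map (starRingEnd ℂ)).eval (((starRingEnd ℂ) z) ^ n)
              = (starRingEnd ℂ) (B.eval (z ^ n)) := by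
            rw [conj_eval, ← map_pow, Complex.conj_conj]
          rw [hA'c, hB'c] at hstarw
          have haw : ((α / (starRingEnd ℂ) z) ^ n : ℂ) = α ^ n / ((starRingEnd ℂ) z) ^ n :=
            div_pow α _ n
          rw [qmap_coe α z, if_neg hz, ratMap_coe _ _ (α / (starRingEnd ℂ) z),
            evalQ, haw, evalP, haw, ratMap_coe _ _ z, evalQ]
          by_cases hBz : B.eval (z ^ n) = 0
          · have hAz : A.eval (z ^ n) ≠ 0 := fun h => hcop _ ⟨h, hBz⟩
            have hAw : A.eval (α ^ n / ((starRingEnd ℂ) z) ^ n) = 0 := by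
              rw [hBz, map_zero, mul_zero] at hstarw
              exact (mul_eq_zero.mp hstarw).resolve_right (by simpa using hAz)
            have hBw : B.eval (α ^ n / ((starRingEnd ℂ) z) ^ n) ≠ 0 :=
              fun h => hcop _ ⟨hAw, h⟩
            rw [if_pos hBz, if_neg hBw, qmap_infty, hAw, mul_zero, zero_div]
          · rw [if_neg hBz, evalP]
            by_cases hAz : A.eval (z ^ n) = 0
            · have hBw : B.eval (α ^ n / ((starRingEnd ℂ) z) ^ n) = 0 := by
                rw [hAz, map_zero, mul_zero] at hstarw
                exact (mul_eq_zero.mp hstarw.symm).resolve_right (by simpa using hBz)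
              rw [hAz, mul_zero, zero_div, qmap_coe α 0, if_pos rfl, if_pos hBw]
            · have hBw : B.eval (α ^ n / ((starRingEnd ℂ) z) ^ n) ≠ 0 := by
                intro h
                rw [h, zero_mul] at hstarw
                rcases mul_eq_zero.mp hstarw with h' | h'
                · exact hcop _ ⟨h', h⟩
                · exact hAz (by simpa using h')
              have hv : (z * A.eval (z ^ n) / B.eval (z ^ n) : ℂ) ≠ 0 :=
                div_ne_zero (mul_ne_zero hz hAz) hBz
              rw [if_neg hBw, qmap_coe α _, if_neg hv, OnePoint.coe_eq_coe]
              simp only [map_div₀, map_mul]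
              have hcA : (starRingEnd ℂ) (A.eval (z ^ n)) ≠ 0 := by simpa using hAz
              have hcB : (starRingEnd ℂ) (B.eval (z ^ n)) ≠ 0 := by simpa using hBz
              field_simp
              linear_combination -hstarw
  · intro p
    induction p using OnePoint.rec with
    | infty =>
      rw [qmap_infty, qmap_coe, if_pos rfl]
      show _ = (if (0:ℂ) = 0 then ∞ else _)
      rw [if_pos rfl]
    | coe z =>
      by_cases hz : z = 0
      · subst hz
        rw [qmap_coe, if_pos rfl, qmap_infty]
        show _ = (if (0:ℂ) * 0 + 1 = 0 then ∞ else ((((α / (starRingEnd ℂ) α) * 0 + 0) / ((0:ℂ) * 0 + 1) : ℂ) : OnePoint ℂ))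
        norm_num
      · have hcz : (starRingEnd ℂ) z ≠ 0 := by simpa using hz
        have hcα : (starRingEnd ℂ) α ≠ 0 := by simpa using hα
        rw [qmap_coe, if_neg hz, qmap_coe, if_neg (div_ne_zero hα hcz)]
        show _ = (if (0:ℂ) * z + 1 = 0 then ∞ else ((((α / (starRingEnd ℂ) α) * z + 0) / ((0:ℂ) * z + 1) : ℂ) : OnePoint ℂ))
        rw [if_neg (by norm_num), OnePoint.coe_eq_coe]
        rw [map_div₀]
        simp only [Complex.conj_conj]
        field_simp
        ring
  · rintro ⟨k, hk⟩
    rw [hk, ← pow_mul, mul_comm k n, pow_mul, ← Complex.exp_nat_mul]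
    have hcn : (n : ℂ) ≠ 0 := Nat.cast_ne_zero.mpr (by omega)
    rw [mul_div_cancel₀ _ hcn, Complex.exp_two_pi_mul_I, one_pow]
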